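/- Let a, b ∈ ℝ with a < b and let h(z) = erf((z − a)/√2) − erf((z − b)/√2). Then h(z) > 0 for all z ∈ ℝ and the function z ↦ log h(z) is concave on ℝ. -/

import Mathlib

/-- The Gauss error function `erf x = (2/√π) ∫₀ˣ exp (−t²) dt`. -/
noncomputable def erf (x : ℝ) : ℝ :=
  (2 / Real.sqrt Real.pi) * ∫ t in (0:ℝ)..x, Real.exp (-t ^ 2)

open Real intervalIntegral

lemma phi_cont : Continuous fun t : ℝ => Real.exp (-t ^ 2) := by continuity

lemma erf_hasDerivAt (x : ℝ) :
    HasDerivAt erf (2 / Real.sqrt Real.pi * Real.exp (-x ^ 2)) x :=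
  ((phi_cont.integral_hasStrictDerivAt 0 x).hasDerivAt).const_mul _

lemma h_eq (a b z : ℝ) :
    erf ((z - a) / Real.sqrt 2) - erf ((z - b) / Real.sqrt 2) =
      (2 / Real.sqrt Real.pi) *
        ∫ t in ((z - b) / Real.sqrt 2)..((z - a) / Real.sqrt 2), Real.exp (-t ^ 2) := by
  unfold erf
  rw [← mul_sub, intervalIntegral.integral_interval_sub_left
    (phi_cont.intervalIntegrable _ _) (phi_cont.intervalIntegrable _ _)]

/-- The key inequality `(∫φ'')·(∫φ) ≤ (∫φ')²` for the Gaussian `φ t = exp(−t²)`,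
which holds because `φ'/φ = −2t` is decreasing. -/
lemma key_ineq (β α : ℝ) (hba : β ≤ α) :
    (-2 * α * Real.exp (-α ^ 2) + 2 * β * Real.exp (-β ^ 2)) *
        (∫ t in β..α, Real.exp (-t ^ 2)) ≤
      (Real.exp (-α ^ 2) - Real.exp (-β ^ 2)) ^ 2 := by
  set I := ∫ t in β..α, Real.exp (-t ^ 2) with hI
  have hderiv : ∀ t : ℝ, HasDerivAt (fun t : ℝ => Real.exp (-t ^ 2))
      (-2 * t * Real.exp (-t ^ 2)) t := by
    intro t
    have h1 : HasDerivAt (fun t : ℝ => -t ^ 2) (-(2 * t)) t := by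
      exact (((hasDerivAt_id' t).pow 2).neg : HasDerivAt (fun t : ℝ => -t ^ 2) (-(2 * t ^ 1 * 1)) t).congr_deriv (by ring)
    have := h1.exp
    convert this using 1
    ring
  have hcont : Continuous fun t : ℝ => -2 * t * Real.exp (-t ^ 2) := by continuity
  have hJ : Real.exp (-α ^ 2) - Real.exp (-β ^ 2)
      = ∫ t in β..α, -2 * t * Real.exp (-t ^ 2) := by
    rw [intervalIntegral.integral_eq_sub_of_hasDerivAt (fun t _ => hderiv t)
      (hcont.intervalIntegrable _ _)]
  have h1 : -2 * α * I ≤ Real.exp (-α ^ 2) - Real.exp (-β ^ 2) := by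
    rw [hJ, hI, ← intervalIntegral.integral_const_mul]
    apply intervalIntegral.integral_mono_on hba
      ((continuous_const.mul phi_cont).intervalIntegrable _ _)
      (hcont.intervalIntegrable _ _)
    intro t ht
    have : -2 * α ≤ -2 * t := by nlinarith [ht.2]
    exact mul_le_mul_of_nonneg_right this (Real.exp_pos _).le
  have h2 : Real.exp (-α ^ 2) - Real.exp (-β ^ 2) ≤ -2 * β * I := by
    rw [hJ, hI, ← intervalIntegral.integral_const_mul]
    apply intervalIntegral.integral_mono_on hba
      (hcont.intervalIntegrable _ _)
      ((continuous_const.mul phi_cont).intervalIntegrable _ _)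
    intro t ht
    have : -2 * t ≤ -2 * β := by nlinarith [ht.1]
    exact mul_le_mul_of_nonneg_right this (Real.exp_pos _).le
  nlinarith [mul_nonneg (Real.exp_pos (-α ^ 2)).le
      (by linarith : (0:ℝ) ≤ Real.exp (-α ^ 2) - Real.exp (-β ^ 2) - (-2 * α * I)),
    mul_nonneg (Real.exp_pos (-β ^ 2)).le
      (by linarith : (0:ℝ) ≤ -2 * β * I - (Real.exp (-α ^ 2) - Real.exp (-β ^ 2)))]

/-- `h`, its first derivative `hh1` and second derivative `hh2`. -/
noncomputable def hh (a b z : ℝ) : ℝ :=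
  erf ((z - a) / Real.sqrt 2) - erf ((z - b) / Real.sqrt 2)

noncomputable def hh1 (a b z : ℝ) : ℝ :=
  2 / Real.sqrt Real.pi / Real.sqrt 2 *
    (Real.exp (-((z - a) / Real.sqrt 2) ^ 2) - Real.exp (-((z - b) / Real.sqrt 2) ^ 2))

noncomputable def hh2 (a b z : ℝ) : ℝ :=
  2 / Real.sqrt Real.pi / 2 *
    (-2 * ((z - a) / Real.sqrt 2) * Real.exp (-((z - a) / Real.sqrt 2) ^ 2) +
      2 * ((z - b) / Real.sqrt 2) * Real.exp (-((z - b) / Real.sqrt 2) ^ 2))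

lemma sqrt2_pos : (0:ℝ) < Real.sqrt 2 := Real.sqrt_pos.2 two_pos
lemma sqrt2_sq : Real.sqrt 2 * Real.sqrt 2 = 2 := Real.mul_self_sqrt two_pos.le

lemma inner_hasDerivAt (c z : ℝ) :
    HasDerivAt (fun z : ℝ => (z - c) / Real.sqrt 2) (1 / Real.sqrt 2) z :=
  ((hasDerivAt_id z).sub_const c).div_const _

lemma hh_hasDerivAt (a b z : ℝ) : HasDerivAt (hh a b) (hh1 a b z) z := by
  have e1 := (erf_hasDerivAt ((z - a) / Real.sqrt 2)).comp z (inner_hasDerivAt a z)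
  have e2 := (erf_hasDerivAt ((z - b) / Real.sqrt 2)).comp z (inner_hasDerivAt b z)
  have := e1.sub e2
  refine this.congr_deriv (Eq.symm ?_)
  unfold hh1
  ring

lemma exp_comp_hasDerivAt (c z : ℝ) :
    HasDerivAt (fun z : ℝ => Real.exp (-((z - c) / Real.sqrt 2) ^ 2))
      (-2 * ((z - c) / Real.sqrt 2) * Real.exp (-((z - c) / Real.sqrt 2) ^ 2)
        * (1 / Real.sqrt 2)) z := by
  have h1 : HasDerivAt (fun z : ℝ => -((z - c) / Real.sqrt 2) ^ 2)
      (-(2 * ((z - c) / Real.sqrt 2) ^ 1 * (1 / Real.sqrt 2))) z :=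
    ((inner_hasDerivAt c z).pow 2).neg
  have := h1.exp
  convert this using 1
  ring

lemma hh1_hasDerivAt (a b z : ℝ) : HasDerivAt (hh1 a b) (hh2 a b z) z := by
  have := ((exp_comp_hasDerivAt a z).sub (exp_comp_hasDerivAt b z)).const_mul
    (2 / Real.sqrt Real.pi / Real.sqrt 2)
  refine this.congr_deriv (Eq.symm ?_)
  unfold hh2
  have hinv : (Real.sqrt 2)⁻¹ * (Real.sqrt 2)⁻¹ = (2:ℝ)⁻¹ := by
    rw [← mul_inv, sqrt2_sq]
  linear_combination (-(2 / Real.sqrt Real.pi) *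
    (-2 * ((z - a) / Real.sqrt 2) * Real.exp (-((z - a) / Real.sqrt 2) ^ 2) +
      2 * ((z - b) / Real.sqrt 2) * Real.exp (-((z - b) / Real.sqrt 2) ^ 2))) * hinv

lemma hh_pos (a b z : ℝ) (hab : a < b) : 0 < hh a b z := by
  rw [hh, h_eq]
  apply mul_pos (by positivity)
  exact intervalIntegral.intervalIntegral_pos_of_pos (phi_cont.intervalIntegrable _ _)
    (fun t => Real.exp_pos _) ((div_lt_div_iff_of_pos_right sqrt2_pos).2 (by linarith))

lemma num_nonpos (a b z : ℝ) (hab : a < b) :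
    hh2 a b z * hh a b z - hh1 a b z * hh1 a b z ≤ 0 := by
  have hba : (z - b) / Real.sqrt 2 ≤ (z - a) / Real.sqrt 2 :=
    (div_le_div_iff_of_pos_right sqrt2_pos).2 (by linarith)
  have hinv : (Real.sqrt 2)⁻¹ * (Real.sqrt 2)⁻¹ = (2:ℝ)⁻¹ := by
    rw [← mul_inv, sqrt2_sq]
  set α := (z - a) / Real.sqrt 2
  set β := (z - b) / Real.sqrt 2
  set I := ∫ t in β..α, Real.exp (-t ^ 2) with hI
  have e : hh2 a b z * hh a b z - hh1 a b z * hh1 a b z =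
      (2 / Real.sqrt Real.pi) ^ 2 / 2 *
        ((-2 * α * Real.exp (-α ^ 2) + 2 * β * Real.exp (-β ^ 2)) * I -
          (Real.exp (-α ^ 2) - Real.exp (-β ^ 2)) ^ 2) := by
    rw [hh, h_eq, hh1, hh2, ← hI]
    linear_combination (-(2 / Real.sqrt Real.pi) ^ 2 *
      (Real.exp (-α ^ 2) - Real.exp (-β ^ 2)) ^ 2) * hinv
  rw [e]
  exact mul_nonpos_of_nonneg_of_nonpos (by positivity)
    (by linarith [key_ineq β α hba])

/-- for `a < b`, the function `h z = erf((z−a)/√2) − erf((z−b)/√2)` is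
positive everywhere and `log ∘ h` is concave on `ℝ`. -/
theorem erf_diff_pos_and_logConcave
    (a b : ℝ) (hab : a < b) :
    (∀ z : ℝ, 0 < erf ((z - a) / Real.sqrt 2) - erf ((z - b) / Real.sqrt 2)) ∧
      ConcaveOn ℝ Set.univ
        (fun z : ℝ =>
          Real.log (erf ((z - a) / Real.sqrt 2) - erf ((z - b) / Real.sqrt 2))) := by
  refine ⟨fun z => hh_pos a b z hab, ?_⟩
  have hpos : ∀ z, 0 < hh a b z := fun z => hh_pos a b z hab
  apply concaveOn_of_hasDerivWithinAt2_nonpos (f' := fun z => hh1 a b z / hh a b z)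
    (f'' := fun z => (hh2 a b z * hh a b z - hh1 a b z * hh1 a b z) / hh a b z ^ 2)
    convex_univ
  · exact fun x _ =>
      (((hh_hasDerivAt a b x).log (hpos x).ne').continuousAt).continuousWithinAt
  · intro x _
    exact ((hh_hasDerivAt a b x).log (hpos x).ne').hasDerivWithinAt
  · intro x _
    exact ((hh1_hasDerivAt a b x).div (hh_hasDerivAt a b x) (hpos x).ne').hasDerivWithinAt
  · intro x _
    exact div_nonpos_of_nonpos_of_nonneg (num_nonpos a b x hab) (sq_nonneg _)
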